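/- With p_m = (k+1)/[k(m+1)·binom(m+2+1/k, m+1)], it holds that p_m · m^{2+1/k} → (k+1)/k · Γ(2+1/k) as m → ∞; i.e., the limiting out-degree distribution of a random inserted node in a random ordered increasing k-tree follows a power law with exponent 2 + 1/k. -/

import Mathlib

open Filter

/-- Generalized binomial coefficient `binom(x, n) = x(x-1)⋯(x-n+1)/n!`. -/
noncomputable def gbinom (x : ℝ) (n : ℕ) : ℝ :=
  (∏ i ∈ Finset.range n, (x - i)) / (Nat.factorial n)

/-- The limiting out-degree probabilities
`p_m = (k+1)/(k(m+1) binom(m+2+1/k, m+1))`. -/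
noncomputable def pLim (k m : ℕ) : ℝ :=
  ((k : ℝ) + 1) / ((k : ℝ) * ((m : ℝ) + 1) * gbinom ((m : ℝ) + 2 + 1 / (k : ℝ)) (m + 1))

/-- Power law: `p_m · m^{2+1/k} → (k+1)/k · Γ(2+1/k)` as `m → ∞`. -/
theorem ktree_outdegree_power_law (k : ℕ) (hk : 1 ≤ k) :
    Tendsto (fun m : ℕ => pLim k m * (m : ℝ) ^ ((2 : ℝ) + 1 / (k : ℝ))) atTop
      (nhds (((k : ℝ) + 1) / (k : ℝ) * Real.Gamma (2 + 1 / (k : ℝ)))) := by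
  have hk0 : (k : ℝ) ≠ 0 := Nat.cast_ne_zero.mpr (by omega)
  set s : ℝ := 2 + 1 / (k : ℝ) with hs
  have key : ∀ m : ℕ, pLim k m * (m : ℝ) ^ s = ((k : ℝ) + 1) / k * Real.GammaSeq s m := by
    intro m
    have hprod : ∏ i ∈ Finset.range (m + 1), ((m : ℝ) + 2 + 1 / k - i)
        = ∏ j ∈ Finset.range (m + 1), (s + j) := by
      rw [← Finset.prod_range_reflect]
      refine Finset.prod_congr rfl fun i hi => ?_
      rw [Finset.mem_range] at hi
      have h1 : i ≤ m := by omega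
      have h2 : m + 1 - 1 - i = m - i := by omega
      rw [h2]
      have : ((m - i : ℕ) : ℝ) = (m : ℝ) - i := by
        push_cast [Nat.cast_sub h1]; ring
      rw [this, hs]; ring
    have hppos : (0 : ℝ) < ∏ j ∈ Finset.range (m + 1), (s + j) := by
      refine Finset.prod_pos fun j _ => ?_
      have : (0 : ℝ) < 1 / (k : ℝ) := by positivity
      have hj : (0 : ℝ) ≤ (j : ℝ) := Nat.cast_nonneg j
      rw [hs]; linarith
    unfold pLim gbinom Real.GammaSeq
    rw [hprod]
    have hm1 : (m : ℝ) + 1 ≠ 0 := by positivity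
    have hfac : ((m + 1).factorial : ℝ) = ((m : ℝ) + 1) * m.factorial := by
      rw [Nat.factorial_succ]; push_cast; ring
    rw [hfac]
    have hfacm : (m.factorial : ℝ) ≠ 0 := Nat.cast_ne_zero.mpr m.factorial_ne_zero
    field_simp
  have := (Real.GammaSeq_tendsto_Gamma s).const_mul (((k : ℝ) + 1) / k)
  refine Tendsto.congr (fun m => (key m).symm) ?_
  simpa [mul_comm] using this
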